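/- arXiv:1810.01120 — 2 statements merged into one kernel-verified Lean document; each statement's English description precedes it below -/
import Mathlib

section
/- Let L be an e-cyclic residuated lattice and P ⊆ L a nonempty subset. Then P is a prefilter of L (that is, x·y ∈ P for all x, y ∈ P, and for all x ∈ P and y ∈ L, |x| ≤ |y| implies y ∈ P) if and only if P is a convex subalgebra of L. -/
universe u

/-- A residuated lattice: a lattice-ordered monoid with left and right residuals.
`ldiv x z` is `x \ z` and `rdiv z y` is `z / y`. -/
class ResiduatedLattice (α : Type u) extends Lattice α, Monoid α where
  ldiv : α → α → α
  rdiv : α → α → α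
  mul_le_iff_le_ldiv : ∀ x y z : α, x * y ≤ z ↔ y ≤ ldiv x z
  mul_le_iff_le_rdiv : ∀ x y z : α, x * y ≤ z ↔ x ≤ rdiv z y

namespace ResiduatedLattice

variable {α : Type u} [ResiduatedLattice α]

/-- `L` is e-cyclic if `x \ e = e / x` for all `x`. -/
def ECyclic (α : Type u) [ResiduatedLattice α] : Prop :=
  ∀ x : α, ldiv x 1 = rdiv 1 x

/-- Absolute value: `|x| = x ⊓ (e / x) ⊓ e`. -/
def absv (x : α) : α := x ⊓ rdiv 1 x ⊓ 1

/-- A convex subalgebra: contains `e`, closed under all the operations, and order-convex. -/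
structure IsConvexSubalgebra (H : Set α) : Prop where
  one_mem : (1 : α) ∈ H
  mul_mem : ∀ ⦃x⦄, x ∈ H → ∀ ⦃y⦄, y ∈ H → x * y ∈ H
  sup_mem : ∀ ⦃x⦄, x ∈ H → ∀ ⦃y⦄, y ∈ H → x ⊔ y ∈ H
  inf_mem : ∀ ⦃x⦄, x ∈ H → ∀ ⦃y⦄, y ∈ H → x ⊓ y ∈ H
  ldiv_mem : ∀ ⦃x⦄, x ∈ H → ∀ ⦃y⦄, y ∈ H → ldiv x y ∈ H
  rdiv_mem : ∀ ⦃x⦄, x ∈ H → ∀ ⦃y⦄, y ∈ H → rdiv x y ∈ H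
  convex : ∀ ⦃a⦄, a ∈ H → ∀ ⦃b⦄, b ∈ H → ∀ ⦃x⦄, a ≤ x → x ≤ b → x ∈ H

/-- `C[S]`: the smallest convex subalgebra containing `S`. -/
def convexClosure (S : Set α) : Set α :=
  ⋂₀ {H : Set α | IsConvexSubalgebra H ∧ S ⊆ H}

end ResiduatedLattice

open ResiduatedLattice

namespace ResiduatedLattice

variable {α : Type u} [ResiduatedLattice α]

lemma my_mul_le_mul_left {a b : α} (c : α) (h : a ≤ b) : c * a ≤ c * b := by
  rw [mul_le_iff_le_ldiv]
  exact le_trans h ((mul_le_iff_le_ldiv c b (c*b)).1 le_rfl)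

lemma my_mul_le_mul_right {a b : α} (c : α) (h : a ≤ b) : a * c ≤ b * c := by
  rw [mul_le_iff_le_rdiv]
  exact le_trans h ((mul_le_iff_le_rdiv b c (b*c)).1 le_rfl)

lemma my_mul_le_mul {a b c d : α} (h1 : a ≤ b) (h2 : c ≤ d) : a * c ≤ b * d :=
  le_trans (my_mul_le_mul_left a h2) (my_mul_le_mul_right d h1)

lemma absv_le_self (x : α) : absv x ≤ x := le_trans inf_le_left inf_le_left

lemma absv_le_one (x : α) : absv x ≤ (1 : α) := inf_le_right

lemma absv_le_rdiv (x : α) : absv x ≤ rdiv 1 x := le_trans inf_le_left inf_le_right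

lemma absv_mul_self_le_one (x : α) : absv x * x ≤ 1 :=
  (mul_le_iff_le_rdiv _ _ _).2 (absv_le_rdiv x)

lemma self_mul_absv_le_one (hec : ECyclic α) (x : α) : x * absv x ≤ 1 :=
  (mul_le_iff_le_ldiv _ _ _).2 (by rw [hec]; exact absv_le_rdiv x)

lemma absv_of_le_one {a : α} (h : a ≤ 1) : absv a = a := by
  have h2 : a ≤ rdiv 1 a := by
    rw [← mul_le_iff_le_rdiv]
    calc a * a ≤ a * 1 := my_mul_le_mul_left a h
    _ = a := mul_one a
    _ ≤ 1 := h
  exact le_antisymm (le_trans inf_le_left inf_le_left)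
    (le_inf (le_inf le_rfl h2) h)

end ResiduatedLattice

/-- a nonempty subset is a prefilter iff it is a convex subalgebra. -/
theorem stmt2 {α : Type u} [ResiduatedLattice α] (hec : ECyclic α)
    (P : Set α) (hP : P.Nonempty) :
    ((∀ x ∈ P, ∀ y ∈ P, x * y ∈ P) ∧
      (∀ x ∈ P, ∀ y : α, absv x ≤ absv y → y ∈ P)) ↔
    IsConvexSubalgebra P := by
  constructor
  · rintro ⟨hmul, habs⟩
    -- absolute values of members are members
    have habsP : ∀ x ∈ P, absv x ∈ P := fun x hx =>
      habs x hx (absv x) (by rw [absv_of_le_one (absv_le_one x)])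
    -- the key principle: if `c ∈ P` is negative, `c ≤ z` and `c * z ≤ 1`, then `z ∈ P`
    have key : ∀ c ∈ P, c ≤ 1 → ∀ z : α, c ≤ z → c * z ≤ 1 → z ∈ P := by
      intro c hc hc1 z hcz hcz1
      refine habs c hc z ?_
      rw [absv_of_le_one hc1]
      exact le_inf (le_inf hcz ((mul_le_iff_le_rdiv _ _ _).1 hcz1)) hc1
    have honemem : (1 : α) ∈ P := by
      obtain ⟨x0, hx0⟩ := hP
      refine key (absv x0) (habsP _ hx0) (absv_le_one _) 1 (absv_le_one _) ?_
      rw [mul_one]; exact absv_le_one _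
    refine ⟨honemem, fun x hx y hy => hmul x hx y hy, ?_, ?_, ?_, ?_, ?_⟩
    · -- sup
      intro x hx y hy
      have hcP : absv y * absv x ∈ P := hmul _ (habsP _ hy) _ (habsP _ hx)
      have hc1 : absv y * absv x ≤ 1 := by
        calc absv y * absv x ≤ 1 * 1 := my_mul_le_mul (absv_le_one y) (absv_le_one x)
        _ = 1 := one_mul 1
      have hcx1 : (absv y * absv x) * x ≤ 1 := by
        rw [mul_assoc]
        calc absv y * (absv x * x) ≤ absv y * 1 :=
          my_mul_le_mul_left _ (absv_mul_self_le_one x)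
        _ = absv y := mul_one _
        _ ≤ 1 := absv_le_one y
      have hcy1 : (absv y * absv x) * y ≤ 1 := by
        rw [mul_assoc]
        calc absv y * (absv x * y) ≤ absv y * (1 * y) :=
          my_mul_le_mul_left _ (my_mul_le_mul_right _ (absv_le_one x))
        _ = absv y * y := by rw [one_mul]
        _ ≤ 1 := absv_mul_self_le_one y
      refine key _ hcP hc1 (x ⊔ y) ?_ ?_
      · calc absv y * absv x ≤ 1 * x := my_mul_le_mul (absv_le_one y) (absv_le_self x)
        _ = x := one_mul x
        _ ≤ x ⊔ y := le_sup_left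
      · rw [mul_le_iff_le_ldiv]
        exact sup_le ((mul_le_iff_le_ldiv _ _ _).1 hcx1) ((mul_le_iff_le_ldiv _ _ _).1 hcy1)
    · -- inf
      intro x hx y hy
      have hcP : absv y * absv x ∈ P := hmul _ (habsP _ hy) _ (habsP _ hx)
      have hc1 : absv y * absv x ≤ 1 := by
        calc absv y * absv x ≤ 1 * 1 := my_mul_le_mul (absv_le_one y) (absv_le_one x)
        _ = 1 := one_mul 1
      refine key _ hcP hc1 (x ⊓ y) ?_ ?_
      · refine le_inf ?_ ?_
        · calc absv y * absv x ≤ 1 * x := my_mul_le_mul (absv_le_one y) (absv_le_self x)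
          _ = x := one_mul x
        · calc absv y * absv x ≤ y * 1 := my_mul_le_mul (absv_le_self y) (absv_le_one x)
          _ = y := mul_one y
      · calc (absv y * absv x) * (x ⊓ y) ≤ (absv y * absv x) * x :=
          my_mul_le_mul_left _ inf_le_left
        _ = absv y * (absv x * x) := mul_assoc _ _ _
        _ ≤ absv y * 1 := my_mul_le_mul_left _ (absv_mul_self_le_one x)
        _ = absv y := mul_one _
        _ ≤ 1 := absv_le_one y
    · -- ldiv
      intro x hx y hy
      have hcP : absv x * absv y * absv x ∈ P :=
        hmul _ (hmul _ (habsP _ hx) _ (habsP _ hy)) _ (habsP _ hx)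
      have hc1 : absv x * absv y * absv x ≤ 1 := by
        calc absv x * absv y * absv x ≤ 1 * 1 * 1 :=
          my_mul_le_mul (my_mul_le_mul (absv_le_one x) (absv_le_one y)) (absv_le_one x)
        _ = 1 := by rw [one_mul, one_mul]
      refine key _ hcP hc1 (ldiv x y) ?_ ?_
      · rw [← mul_le_iff_le_ldiv]
        calc x * (absv x * absv y * absv x) = (x * absv x) * (absv y * absv x) := by simp only [mul_assoc]
        _ ≤ 1 * (absv y * absv x) :=
          my_mul_le_mul_right _ (self_mul_absv_le_one hec x)
        _ = absv y * absv x := one_mul _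
        _ ≤ y * 1 := my_mul_le_mul (absv_le_self y) (absv_le_one x)
        _ = y := mul_one y
      · calc (absv x * absv y * absv x) * ldiv x y ≤ (1 * absv y * x) * ldiv x y := my_mul_le_mul_right _ (my_mul_le_mul (my_mul_le_mul (absv_le_one x) le_rfl) (absv_le_self x))
        _ = absv y * (x * ldiv x y) := by rw [one_mul, mul_assoc]
        _ ≤ absv y * y :=
          my_mul_le_mul_left _ ((mul_le_iff_le_ldiv x (ldiv x y) y).2 le_rfl)
        _ ≤ 1 := absv_mul_self_le_one y
    · -- rdiv
      intro x hx y hy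
      have hcP : absv y * absv x * absv y ∈ P :=
        hmul _ (hmul _ (habsP _ hy) _ (habsP _ hx)) _ (habsP _ hy)
      have hc1 : absv y * absv x * absv y ≤ 1 := by
        calc absv y * absv x * absv y ≤ 1 * 1 * 1 :=
          my_mul_le_mul (my_mul_le_mul (absv_le_one y) (absv_le_one x)) (absv_le_one y)
        _ = 1 := by rw [one_mul, one_mul]
      refine key _ hcP hc1 (rdiv x y) ?_ ?_
      · rw [← mul_le_iff_le_rdiv]
        calc (absv y * absv x * absv y) * y = (absv y * absv x) * (absv y * y) :=
            mul_assoc _ _ _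
        _ ≤ (absv y * absv x) * 1 := my_mul_le_mul_left _ (absv_mul_self_le_one y)
        _ = absv y * absv x := mul_one _
        _ ≤ 1 * x := my_mul_le_mul (absv_le_one y) (absv_le_self x)
        _ = x := one_mul x
      · -- c * (x / y) ≤ 1 via e-cyclicity: show (x / y) * c ≤ 1 first
        have hzc : rdiv x y * (absv y * absv x * absv y) ≤ 1 := by
          calc rdiv x y * (absv y * absv x * absv y)
              ≤ rdiv x y * (y * absv x * 1) := my_mul_le_mul_left _ (my_mul_le_mul (my_mul_le_mul (absv_le_self y) le_rfl) (absv_le_one y))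
          _ = (rdiv x y * y) * absv x := by rw [mul_one, ← mul_assoc]
          _ ≤ x * absv x :=
            my_mul_le_mul_right _ ((mul_le_iff_le_rdiv (rdiv x y) y x).2 le_rfl)
          _ ≤ 1 := self_mul_absv_le_one hec x
        rw [mul_le_iff_le_rdiv]
        rw [← hec]
        exact (mul_le_iff_le_ldiv _ _ _).1 hzc
    · -- convexity
      intro a ha b hb x hax hxb
      have hcP : absv a * absv b ∈ P := hmul _ (habsP _ ha) _ (habsP _ hb)
      have hc1 : absv a * absv b ≤ 1 := by
        calc absv a * absv b ≤ 1 * 1 := my_mul_le_mul (absv_le_one a) (absv_le_one b)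
        _ = 1 := one_mul 1
      refine key _ hcP hc1 x ?_ ?_
      · calc absv a * absv b ≤ a * 1 := my_mul_le_mul (absv_le_self a) (absv_le_one b)
        _ = a := mul_one a
        _ ≤ x := hax
      · calc (absv a * absv b) * x ≤ (absv a * absv b) * b := my_mul_le_mul_left _ hxb
        _ = absv a * (absv b * b) := mul_assoc _ _ _
        _ ≤ absv a * 1 := my_mul_le_mul_left _ (absv_mul_self_le_one b)
        _ = absv a := mul_one _
        _ ≤ 1 := absv_le_one a
  · intro h
    refine ⟨fun x hx y hy => h.mul_mem hx hy, ?_⟩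
    intro x hx y hxy
    have habsx : absv x ∈ P :=
      h.inf_mem (h.inf_mem hx (h.rdiv_mem h.one_mem hx)) h.one_mem
    have habsy : absv y ∈ P := h.convex habsx h.one_mem hxy (absv_le_one y)
    have hyub : y ≤ ldiv (absv y) 1 :=
      (mul_le_iff_le_ldiv _ _ _).1 (absv_mul_self_le_one y)
    exact h.convex habsy (h.ldiv_mem habsy h.one_mem) (absv_le_self y) hyub
end

section
/- Let L be an e-cyclic residuated lattice. For a convex subalgebra H of L define the relation Θ_H = {(a, b) ∈ L × L : (a\b) ∧ (b\a) ∧ e ∈ H}. Then: (i) Θ_H is an equivalence relation on L compatible with ∨ and ∧ (i.e., a congruence of the lattice (L, ∨, ∧)); (ii) the Θ_H-class of e equals H; and (iii) for convex subalgebras H and K of L, H ⊆ K if and only if Θ_H ⊆ Θ_K. -/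
universe u

open ResiduatedLattice

/-- The relation `Θ_H`: `a Θ_H b` iff `(a\b) ⊓ (b\a) ⊓ e ∈ H`. -/
def theta {α : Type u} [ResiduatedLattice α] (H : Set α) (a b : α) : Prop :=
  ldiv a b ⊓ ldiv b a ⊓ 1 ∈ H


namespace ResiduatedLattice

variable {α : Type u} [ResiduatedLattice α]

lemma mul_ldiv_le (a b : α) : a * ldiv a b ≤ b :=
  (mul_le_iff_le_ldiv a (ldiv a b) b).mpr le_rfl

lemma mul_le_mul'' {x x' y y' : α} (h1 : x ≤ x') (h2 : y ≤ y') : x * y ≤ x' * y' := by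
  have s1 : x * y ≤ x' * y :=
    (mul_le_iff_le_rdiv x y (x' * y)).mpr
      (h1.trans ((mul_le_iff_le_rdiv x' y (x' * y)).mp le_rfl))
  have s2 : x' * y ≤ x' * y' :=
    (mul_le_iff_le_ldiv x' y (x' * y')).mpr
      (h2.trans ((mul_le_iff_le_ldiv x' y' (x' * y')).mp le_rfl))
  exact s1.trans s2

lemma ldiv_one_eq (x : α) : ldiv (1 : α) x = x := by
  refine le_antisymm ?_ ?_
  · have := mul_ldiv_le (1 : α) x; rwa [one_mul] at this
  · exact (mul_le_iff_le_ldiv 1 x x).mp (by rw [one_mul])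

lemma ldiv_mul_ldiv_le (a b c : α) : ldiv a b * ldiv b c ≤ ldiv a c := by
  rw [← mul_le_iff_le_ldiv, ← mul_assoc]
  exact (mul_le_mul'' (mul_ldiv_le a b) le_rfl).trans (mul_ldiv_le b c)

lemma key_sup {a b c d : α} : (ldiv a b ⊓ 1) ⊓ (ldiv c d ⊓ 1) ≤ ldiv (a ⊔ c) (b ⊔ d) := by
  set t := (ldiv a b ⊓ 1) ⊓ (ldiv c d ⊓ 1) with ht
  rw [← mul_le_iff_le_ldiv, mul_le_iff_le_rdiv]
  refine sup_le ?_ ?_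
  · rw [← mul_le_iff_le_rdiv]
    exact (mul_le_mul'' le_rfl (inf_le_left.trans inf_le_left)).trans
      ((mul_ldiv_le a b).trans le_sup_left)
  · rw [← mul_le_iff_le_rdiv]
    exact (mul_le_mul'' le_rfl (inf_le_right.trans inf_le_left)).trans
      ((mul_ldiv_le c d).trans le_sup_right)

lemma key_inf {a b c d : α} : (ldiv a b ⊓ 1) ⊓ (ldiv c d ⊓ 1) ≤ ldiv (a ⊓ c) (b ⊓ d) := by
  rw [← mul_le_iff_le_ldiv]
  refine le_inf ?_ ?_
  · exact (mul_le_mul'' inf_le_left (inf_le_left.trans inf_le_left)).trans (mul_ldiv_le a b)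
  · exact (mul_le_mul'' inf_le_right (inf_le_right.trans inf_le_left)).trans (mul_ldiv_le c d)

end ResiduatedLattice

open ResiduatedLattice in
lemma theta_one_iff {α : Type u} [ResiduatedLattice α] {H : Set α}
    (hH : IsConvexSubalgebra H) (x : α) : theta H 1 x ↔ x ∈ H := by
  unfold theta
  rw [ldiv_one_eq]
  constructor
  · intro hw
    refine hH.convex hw (hH.rdiv_mem hH.one_mem hw) (inf_le_left.trans inf_le_left) ?_
    rw [← mul_le_iff_le_rdiv]
    exact (mul_le_mul'' le_rfl (inf_le_left.trans inf_le_right)).trans (mul_ldiv_le x 1)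
  · intro hx
    exact hH.inf_mem (hH.inf_mem hx (hH.ldiv_mem hx hH.one_mem)) hH.one_mem


/-- `Θ_H` is a lattice congruence whose class of `e` is `H`,
and `H ⊆ K` iff `Θ_H ⊆ Θ_K`. -/
theorem stmt5 {α : Type u} [ResiduatedLattice α] (hec : ECyclic α)
    (H : Set α) (hH : IsConvexSubalgebra H) :
    Equivalence (theta H) ∧
    (∀ a b c d : α, theta H a b → theta H c d →
      theta H (a ⊔ c) (b ⊔ d) ∧ theta H (a ⊓ c) (b ⊓ d)) ∧
    {x : α | theta H 1 x} = H ∧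
    (∀ K : Set α, IsConvexSubalgebra K →
      (H ⊆ K ↔ ∀ a b : α, theta H a b → theta K a b)) := by
  have one_le_ldiv_self : ∀ a : α, (1:α) ≤ ldiv a a := fun a =>
    (mul_le_iff_le_ldiv a 1 a).mp (by rw [mul_one])
  refine ⟨⟨?_, ?_, ?_⟩, ?_, Set.ext fun x => theta_one_iff hH x,
    fun K hK => ⟨fun hsub a b h => hsub h,
      fun hmono x hx => (theta_one_iff hK x).mp (hmono 1 x ((theta_one_iff hH x).mpr hx))⟩⟩
  · -- reflexivity
    intro a
    unfold theta
    have : ldiv a a ⊓ ldiv a a ⊓ 1 = (1:α) :=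
      le_antisymm inf_le_right
        (le_inf (le_inf (one_le_ldiv_self a) (one_le_ldiv_self a)) le_rfl)
    rw [this]; exact hH.one_mem
  · -- symmetry
    intro a b h
    unfold theta at h ⊢
    rwa [inf_comm (ldiv b a) (ldiv a b)]
  · -- transitivity
    intro a b c hab hbc
    unfold theta at hab hbc ⊢
    set u := ldiv a b ⊓ ldiv b a ⊓ 1 with hu
    set v := ldiv b c ⊓ ldiv c b ⊓ 1 with hv
    have hw : u * v ⊓ (v * u) ⊓ 1 ∈ H :=
      hH.inf_mem (hH.inf_mem (hH.mul_mem hab hbc) (hH.mul_mem hbc hab)) hH.one_mem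
    refine hH.convex hw hH.one_mem ?_ inf_le_right
    refine le_inf (le_inf ?_ ?_) inf_le_right
    · exact (inf_le_left.trans inf_le_left).trans
        ((mul_le_mul'' (inf_le_left.trans inf_le_left) (inf_le_left.trans inf_le_left)).trans
          (ldiv_mul_ldiv_le a b c))
    · exact (inf_le_left.trans inf_le_right).trans
        ((mul_le_mul'' (inf_le_left.trans inf_le_right) (inf_le_left.trans inf_le_right)).trans
          (ldiv_mul_ldiv_le c b a))
  · -- lattice compatibility
    intro a b c d hab hcd
    unfold theta at hab hcd ⊢
    set u := ldiv a b ⊓ ldiv b a ⊓ 1 with hu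
    set v := ldiv c d ⊓ ldiv d c ⊓ 1 with hv
    have huv : u ⊓ v ∈ H := hH.inf_mem hab hcd
    have h1 : u ⊓ v ≤ (ldiv a b ⊓ 1) ⊓ (ldiv c d ⊓ 1) :=
      le_inf (inf_le_left.trans (le_inf (inf_le_left.trans inf_le_left) inf_le_right))
        (inf_le_right.trans (le_inf (inf_le_left.trans inf_le_left) inf_le_right))
    have h2 : u ⊓ v ≤ (ldiv b a ⊓ 1) ⊓ (ldiv d c ⊓ 1) :=
      le_inf (inf_le_left.trans (le_inf (inf_le_left.trans inf_le_right) inf_le_right))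
        (inf_le_right.trans (le_inf (inf_le_left.trans inf_le_right) inf_le_right))
    have hle1 : u ⊓ v ≤ (1:α) := inf_le_left.trans inf_le_right
    constructor
    · refine hH.convex huv hH.one_mem ?_ inf_le_right
      exact le_inf (le_inf (h1.trans key_sup) (h2.trans key_sup)) hle1
    · refine hH.convex huv hH.one_mem ?_ inf_le_right
      exact le_inf (le_inf (h1.trans key_inf) (h2.trans key_inf)) hle1
end
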